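/- arXiv:2404.02816 — 4 statements merged into one kernel-verified Lean document; each statement's English description precedes it below -/
import Mathlib

section
/- Consider a codistribution P and an involutive distribution D with D⌟P = 0 on an n-dimensional manifold, and let P̂ be the smallest codistribution containing P which is invariant with respect to D. Then, after performing a coordinate transformation x̄ = Φ(x) such that D = span{∂_{x̄¹},…,∂_{x̄^d}}, the codistribution P̂ possesses a basis of 1-forms of the form ω = a_i(x̄^{d+1},…,x̄ⁿ) dx̄^i with i ranging over d+1,…,n, i.e., a basis which contains none of the differentials dx̄¹,…,dx̄^d and whose coefficients are independent of the coordinates x̄¹,…,x̄^d. -/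
noncomputable section
open Function Filter Topology

/-- Points of the `N`-dimensional manifold (global coordinates). -/
abbrev Pt (N : ℕ) := Fin N → ℝ
/-- The ring of real-valued functions on the manifold (smooth functions live here). -/
abbrev FF (N : ℕ) := Pt N → ℝ
/-- Coefficient functions of vector fields `v = vⁱ∂_{xⁱ}` and of 1-forms `ω = ω_i dxⁱ`,
regarded as a module over the function ring `FF N`. -/
abbrev VF (N : ℕ) := Pt N → Pt N

/-- Contraction (interior product) `v⌟ω = vⁱω_i` of a vector field with a 1-form. -/
def contr {N : ℕ} (v ω : VF N) : FF N := fun z => ∑ i, v z i * ω z i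

/-- Lie derivative of the 1-form `ω` along the vector field `v` (in coordinates):
`(L_v ω)_i = vᵏ ∂_{xᵏ}ω_i + ω_k ∂_{xⁱ}vᵏ`. -/
def lieD {N : ℕ} (v ω : VF N) : VF N :=
  fun z i => fderiv ℝ (fun y => ω y i) z (v z)
    + ∑ k, ω z k * fderiv ℝ (fun y => v y k) z (Pi.single i 1)

/-- The contraction `v⌟dω` of a vector field with the exterior derivative of a 1-form:
`(v⌟dω)_i = vᵏ(∂_{xᵏ}ω_i − ∂_{xⁱ}ω_k)`. -/
def intD {N : ℕ} (v ω : VF N) : VF N :=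
  fun z i => ∑ k, v z k *
    (fderiv ℝ (fun y => ω y i) z (Pi.single k 1) - fderiv ℝ (fun y => ω y k) z (Pi.single i 1))

/-- Lie bracket `[v,w]` of two vector fields (in coordinates). -/
def lieB {N : ℕ} (v w : VF N) : VF N :=
  fun z i => fderiv ℝ (fun y => w y i) z (v z) - fderiv ℝ (fun y => v y i) z (w z)

/-- `P` is a `p`-dimensional codistribution: it is spanned (over the function ring) by `p`
smooth, pointwise linearly independent 1-forms. -/
def CodistOfDim {N : ℕ} (P : Submodule (FF N) (VF N)) (p : ℕ) : Prop :=
  ∃ ω : Fin p → VF N, (∀ j, ContDiff ℝ (⊤ : ℕ∞) (ω j)) ∧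
    (∀ z, LinearIndependent ℝ (fun j => ω j z)) ∧
    P = Submodule.span (FF N) (Set.range ω)

/-- `P` is a codistribution (of locally — here globally — constant dimension). -/
def IsCodist {N : ℕ} (P : Submodule (FF N) (VF N)) : Prop := ∃ p, CodistOfDim P p

/-- Invariance of the codistribution `P` w.r.t. the distribution spanned by the vector
fields `v i`: `L_{v i} ω ∈ P` for all `ω ∈ P`. -/
def InvariantUnder {N d : ℕ} (v : Fin d → VF N) (P : Submodule (FF N) (VF N)) : Prop :=
  ∀ i, ∀ ω ∈ P, lieD (v i) ω ∈ P

/-- The smallest submodule containing `P` which is invariant w.r.t. the distribution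
spanned by the `v i`. -/
def invClosure {N d : ℕ} (v : Fin d → VF N) (P : Submodule (FF N) (VF N)) :
    Submodule (FF N) (VF N) :=
  sInf {Q | P ≤ Q ∧ InvariantUnder v Q}


/-! ### Auxiliary lemmas -/

/-- Membership in the span over the function ring is a pointwise condition. -/
lemma mem_spanFF_iff {N m : ℕ} (b : Fin m → VF N) (η : VF N) :
    η ∈ Submodule.span (FF N) (Set.range b) ↔
      ∀ z, η z ∈ Submodule.span ℝ (Set.range fun j => b j z) := by
  constructor
  · intro hη z
    let Q : Submodule (FF N) (VF N) :=
      { carrier := {η | ∀ z, η z ∈ Submodule.span ℝ (Set.range fun j => b j z)}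
        add_mem' := fun h1 h2 z => add_mem (h1 z) (h2 z)
        zero_mem' := fun z => zero_mem _
        smul_mem' := fun f η h z => by
          have : (f • η) z = f z • η z := rfl
          rw [this]; exact Submodule.smul_mem _ _ (h z) }
    have hsub : Set.range b ⊆ (Q : Set (VF N)) := by
      rintro x ⟨j, rfl⟩ z
      exact Submodule.subset_span ⟨j, rfl⟩
    exact Submodule.span_le.2 hsub hη z
  · intro hη
    have hch : ∀ z, ∃ c : Fin m → ℝ, ∑ j, c j • b j z = η z := fun z =>
      (Submodule.mem_span_range_iff_exists_fun ℝ).1 (hη z)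
    choose c hc using hch
    have : η = ∑ j, (fun z => c z j : FF N) • b j := by
      funext z
      rw [Finset.sum_apply]
      simp only [Pi.smul_apply', smul_eq_mul]
      exact (hc z).symm
    rw [this]
    exact Submodule.sum_mem _ fun j _ =>
      Submodule.smul_mem _ _ (Submodule.subset_span ⟨j, rfl⟩)

lemma det_differentiable {q : ℕ} {A : ℝ → Matrix (Fin q) (Fin q) ℝ}
    (h : ∀ i j, Differentiable ℝ fun t => A t i j) :
    Differentiable ℝ fun t => (A t).det := by
  simp only [Matrix.det_apply']
  apply Differentiable.fun_sum
  intro σ _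
  exact ((Differentiable.fun_finset_prod (u := Finset.univ)
    (fun i _ => h (σ i) i))).const_mul _

lemma adjugate_differentiable {q : ℕ} {A : ℝ → Matrix (Fin q) (Fin q) ℝ}
    (h : ∀ i j, Differentiable ℝ fun t => A t i j) (i j : Fin q) :
    Differentiable ℝ fun t => (A t).adjugate i j := by
  simp only [Matrix.adjugate_apply]
  apply det_differentiable
  intro k a
  simp only [Matrix.updateRow_apply]
  by_cases hk : k = j
  · simp [hk]
  · simp only [hk, if_false]; exact h k a

/-- The key analytic lemma: if a pointwise linearly independent smooth family of vectors
has all its derivatives inside its own span, then its span is constant. -/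
lemma span_const_of_deriv_mem {N q : ℕ} (F : ℝ → Fin q → Pt N)
    (hdiff : ∀ j, Differentiable ℝ (fun t => F t j))
    (hli : ∀ t, LinearIndependent ℝ (F t))
    (hder : ∀ t j, deriv (fun s => F s j) t ∈ Submodule.span ℝ (Set.range (F t)))
    (s t : ℝ) :
    Submodule.span ℝ (Set.range (F s)) = Submodule.span ℝ (Set.range (F t)) := by
  set W : ℝ → Submodule ℝ (Pt N) := fun t => Submodule.span ℝ (Set.range (F t)) with hWdef
  suffices hloc : IsLocallyConstant W from hloc.apply_eq_of_preconnectedSpace s t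
  rw [IsLocallyConstant.iff_eventually_eq]
  intro t₀
  have li := hli t₀
  obtain ⟨C, hC⟩ := Submodule.exists_isCompl (W t₀)
  set B : Module.Basis (Fin q) ℝ (W t₀) := Module.Basis.span li with hBdef
  set pr : Pt N →ₗ[ℝ] (W t₀) := Submodule.linearProjOfIsCompl _ _ hC with hprdef
  set L : Pt N →ₗ[ℝ] (Fin q → ℝ) := LinearMap.pi (fun a => (B.coord a).comp pr) with hLdef
  have hL : ∀ j, L (F t₀ j) = fun a => (1 : Matrix (Fin q) (Fin q) ℝ) j a := by
    intro j
    funext a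
    have hmem : F t₀ j ∈ W t₀ := Submodule.subset_span ⟨j, rfl⟩
    have h1 : pr (F t₀ j) = ⟨F t₀ j, hmem⟩ :=
      Submodule.linearProjOfIsCompl_apply_left hC ⟨F t₀ j, hmem⟩
    have h2 : (⟨F t₀ j, hmem⟩ : W t₀) = B j := by
      apply Subtype.ext
      exact (congrArg Subtype.val (Module.Basis.span_apply li j)).symm
    show B.coord a (pr (F t₀ j)) = _
    rw [h1, h2, Module.Basis.coord_apply, B.repr_self, Finsupp.single_apply, Matrix.one_apply]
  -- the matrix of L-coordinates
  set M : ℝ → Matrix (Fin q) (Fin q) ℝ := fun t => Matrix.of (fun k a => L (F t k) a)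
    with hMdef
  have hM0 : M t₀ = 1 := by
    ext k a
    show L (F t₀ k) a = _
    rw [hL k]
  have hMd : ∀ k a, Differentiable ℝ (fun t => M t k a) := by
    intro k a
    have : (fun t => M t k a) = fun t => ((LinearMap.proj a).comp L) (F t k) := rfl
    rw [this]
    exact (((LinearMap.proj a).comp L).toContinuousLinearMap.differentiable).comp (hdiff k)
  have hdet : Differentiable ℝ (fun t => (M t).det) := det_differentiable hMd
  set U : Set ℝ := (fun t => (M t).det) ⁻¹' {x | x ≠ (0:ℝ)} with hUdef
  have hUopen : IsOpen U := hdet.continuous.isOpen_preimage _ isOpen_ne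
  have ht₀U : t₀ ∈ U := by
    simp only [hUdef, Set.mem_preimage, Set.mem_setOf_eq, hM0, Matrix.det_one]
    exact one_ne_zero
  obtain ⟨ε, εpos, hball⟩ := Metric.isOpen_iff.1 hUopen t₀ ht₀U
  set c : ℝ → Fin q → Fin q → ℝ := fun t j k => ((M t).det)⁻¹ * (M t).adjugate j k with hcdef
  have hcinv : ∀ t ∈ U, ∀ j k, (M t)⁻¹ j k = c t j k := by
    intro t ht j k
    rw [Matrix.inv_def, Matrix.smul_apply, Ring.inverse_eq_inv, smul_eq_mul]
  have key : ∀ t ∈ U, ∀ j a, (∑ k, c t j k * M t k a) = (1 : Matrix (Fin q) (Fin q) ℝ) j a := by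
    intro t ht j a
    have h1 : (∑ k, c t j k * M t k a) = ((M t)⁻¹ * M t) j a := by
      rw [Matrix.mul_apply]
      exact Finset.sum_congr rfl fun k _ => by rw [hcinv t ht j k]
    rw [h1, Matrix.nonsing_inv_mul _ (isUnit_iff_ne_zero.2 ht)]
  have hcdiff : ∀ t ∈ U, ∀ j k, DifferentiableAt ℝ (fun s => c s j k) t := by
    intro t ht j k
    exact ((hdet t).inv ht).mul ((adjugate_differentiable hMd j k) t)
  set h : ℝ → Fin q → Pt N := fun t j => ∑ k, c t j k • F t k with hhdef
  -- L of h is constantly the identity rows on U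
  have hLh : ∀ t ∈ U, ∀ j, L (h t j) = fun a => (1 : Matrix (Fin q) (Fin q) ℝ) j a := by
    intro t ht j
    funext a
    have h1 : L (h t j) a = ∑ k, c t j k * M t k a := by
      simp only [hhdef, map_sum, map_smul]
      rw [Finset.sum_apply]
      exact Finset.sum_congr rfl fun k _ => rfl
    rw [h1, key t ht j a]
  -- derivative of h vanishes on the ball
  have hballU : Metric.ball t₀ ε ⊆ U := hball
  have hderh : ∀ j, ∀ t ∈ Metric.ball t₀ ε, HasDerivAt (fun s => h s j) 0 t := by
    intro j t ht
    have htU : t ∈ U := hballU ht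
    set D : Pt N := ∑ k, (c t j k • deriv (fun s => F s k) t
      + deriv (fun s => c s j k) t • F t k) with hDdef
    have hD : HasDerivAt (fun s => h s j) D t := by
      apply HasDerivAt.fun_sum
      intro k _
      exact ((hcdiff t htU j k).hasDerivAt).smul ((hdiff k t).hasDerivAt)
    have hDW : D ∈ W t := by
      apply Submodule.sum_mem
      intro k _
      exact Submodule.add_mem _
        (Submodule.smul_mem _ _ (hder t k))
        (Submodule.smul_mem _ _ (Submodule.subset_span ⟨k, rfl⟩))
    obtain ⟨e, he⟩ := (Submodule.mem_span_range_iff_exists_fun ℝ).1 hDW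
    -- L D = 0
    have hLD : L D = 0 := by
      have hcomp : HasDerivAt (fun s => L.toContinuousLinearMap (h s j))
          (L.toContinuousLinearMap D) t :=
        L.toContinuousLinearMap.hasFDerivAt.comp_hasDerivAt t hD
      have hconst : HasDerivAt (fun s => L.toContinuousLinearMap (h s j)) 0 t := by
        apply HasDerivAt.congr_of_eventuallyEq (hasDerivAt_const t
          (fun a => (1 : Matrix (Fin q) (Fin q) ℝ) j a))
        filter_upwards [hUopen.mem_nhds htU] with s hs
        exact hLh s hs j
      have := hcomp.unique hconst
      exact this
    -- conclude e = 0 hence D = 0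
    have hvec : Matrix.vecMul e (M t) = 0 := by
      funext a
      have h1 : L D a = ∑ k, e k * M t k a := by
        rw [← he]
        simp only [map_sum, map_smul]
        rw [Finset.sum_apply]
        exact Finset.sum_congr rfl fun k _ => rfl
      have h2 : L D a = 0 := by rw [hLD]; rfl
      have : (Matrix.vecMul e (M t)) a = ∑ k, e k * M t k a := by
        simp [Matrix.vecMul, dotProduct]
      rw [this, ← h1, h2]; rfl
    have he0 : e = 0 := by
      have h1 : Matrix.vecMul e ((M t) * (M t)⁻¹) = 0 := by
        rw [← Matrix.vecMul_vecMul, hvec, Matrix.zero_vecMul]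
      rwa [Matrix.mul_nonsing_inv _ (isUnit_iff_ne_zero.2 htU), Matrix.vecMul_one] at h1
    have hD0 : D = 0 := by
      rw [← he, he0]
      simp
    rw [← hD0]
    exact hD
  -- h is constant on the ball
  have hconst : ∀ j, ∀ t ∈ Metric.ball t₀ ε, h t j = h t₀ j := by
    intro j t ht
    have hcv : Convex ℝ (Metric.ball t₀ ε) := convex_ball t₀ ε
    apply hcv.is_const_of_fderivWithin_eq_zero (𝕜 := ℝ) (f := fun s => h s j)
    · intro x hx
      exact (hderh j x hx).differentiableAt.differentiableWithinAt
    · intro x hx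
      rw [fderivWithin_of_isOpen Metric.isOpen_ball hx]
      have := (hderh j x hx).hasFDerivAt.fderiv
      rw [this]
      ext y
      simp
    · exact ht
    · exact Metric.mem_ball_self εpos
  -- h t₀ j = F t₀ j
  have hht₀ : ∀ j, h t₀ j = F t₀ j := by
    intro j
    have hc0 : ∀ k, c t₀ j k = (1 : Matrix (Fin q) (Fin q) ℝ) j k := by
      intro k
      simp [hcdef, hM0, Matrix.det_one, Matrix.adjugate_one]
    simp only [hhdef, hc0]
    rw [Finset.sum_congr rfl (fun k _ => by
      rw [Matrix.one_apply, ite_smul, one_smul, zero_smul])]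
    simp
  -- W is locally constant near t₀
  have hWloc : ∀ t ∈ Metric.ball t₀ ε, W t = W t₀ := by
    intro t ht
    have hle : W t₀ ≤ W t := by
      rw [hWdef]
      simp only
      rw [Submodule.span_le]
      rintro x ⟨j, rfl⟩
      have : F t₀ j = h t j := by rw [hconst j t ht, hht₀ j]
      rw [this]
      exact Submodule.sum_mem _ fun k _ =>
        Submodule.smul_mem _ _ (Submodule.subset_span ⟨k, rfl⟩)
    have hfr : Module.finrank ℝ (W t₀) = Module.finrank ℝ (W t) := by
      rw [hWdef]
      simp only
      rw [finrank_span_eq_card li, finrank_span_eq_card (hli t)]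
    exact (Submodule.eq_of_le_of_finrank_eq hle hfr).symm
  exact Filter.eventually_of_mem (Metric.ball_mem_nhds t₀ εpos) hWloc

lemma le_invClosure {N d : ℕ} (v : Fin d → VF N) (P : Submodule (FF N) (VF N)) :
    P ≤ invClosure v P := le_sInf fun _ hQ => hQ.1

lemma invClosure_invariant {N d : ℕ} (v : Fin d → VF N) (P : Submodule (FF N) (VF N)) :
    InvariantUnder v (invClosure v P) := by
  intro i ω hω
  rw [invClosure, Submodule.mem_sInf] at hω ⊢
  intro Q hQ
  exact hQ.2 i ω (hω Q hQ)

lemma invClosure_le {N d : ℕ} {v : Fin d → VF N} {P Q : Submodule (FF N) (VF N)}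
    (h1 : P ≤ Q) (h2 : InvariantUnder v Q) : invClosure v P ≤ Q := sInf_le ⟨h1, h2⟩

lemma lieD_const {N : ℕ} (u : Pt N) (η : VF N) :
    lieD (fun _ => u) η = fun z k => fderiv ℝ (fun y => η y k) z u := by
  funext z k
  simp [lieD]

lemma sum_single_mul {N : ℕ} (i : Fin N) (w : Pt N) :
    ∑ k, (Pi.single i 1 : Pt N) k * w k = w i := by
  simp [Pi.single_apply, ite_mul]

lemma fderiv_comp_proj {N : ℕ} {f : Pt N → Pt N} (hf : Differentiable ℝ f)
    (z u : Pt N) (k : Fin N) :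
    fderiv ℝ f z u k = fderiv ℝ (fun y => f y k) z u := by
  have h0 := (ContinuousLinearMap.proj (R := ℝ) (φ := fun _ : Fin N => ℝ)
      k).hasFDerivAt.comp z (hf z).hasFDerivAt
  have h1 : HasFDerivAt (fun y => f y k)
      ((ContinuousLinearMap.proj k).comp (fderiv ℝ f z)) z := h0
  rw [h1.fderiv]
  rfl

/-- The submodule of covector fields whose first `d` components vanish. -/
def vanishMod (N d : ℕ) : Submodule (FF N) (VF N) where
  carrier := {η | ∀ z (i : Fin N), (i : ℕ) < d → η z i = 0}
  add_mem' := by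
    intro a b h1 h2 z i hi
    show a z i + b z i = 0
    rw [h1 z i hi, h2 z i hi, add_zero]
  zero_mem' := fun z i hi => rfl
  smul_mem' := by
    intro f η h z i hi
    show (f • η) z i = 0
    rw [Pi.smul_apply', Pi.smul_apply, h z i hi, smul_zero]


/-- Corollary 5 (items 1–4) of the paper, in straightened coordinates:
let `D` be the involutive distribution spanned by the first `d` coordinate vector fields
`∂_{x̄¹},…,∂_{x̄^d}` (which one can always arrange by the Frobenius theorem for an
involutive `D`), let `P = span{ω¹,…,ωᵖ}` be a codistribution with `D⌟P = 0`, and let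
`P̂` be the smallest codistribution containing `P` which is invariant w.r.t. `D`. Then `P̂`
possesses a basis of 1-forms `a_i(x̄^{d+1},…,x̄ᴺ)dx̄^i`, `i = d+1,…,N`: a basis containing
none of the differentials `dx̄¹,…,dx̄^d`, with coefficients independent of `x̄¹,…,x̄^d`. -/
theorem invariant_closure_reduced_basis
    {N p d : ℕ} (hd : d ≤ N)
    (ω : Fin p → VF N)
    (hωs : ∀ j, ContDiff ℝ (⊤ : ℕ∞) (ω j))
    (hωi : ∀ z, LinearIndependent ℝ (fun j => ω j z))
    -- the straightened distribution D = span{∂_{x̄¹},…,∂_{x̄^d}}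
    (v : Fin d → VF N)
    (hv : ∀ i, v i = fun _ => Pi.single (Fin.castLE hd i) 1)
    -- D⌟P = 0
    (hann : ∀ i j, contr (v i) (ω j) = 0)
    -- regularity: the smallest invariant extension is a codistribution
    (hreg : IsCodist (invClosure v (Submodule.span (FF N) (Set.range ω)))) :
    ∃ (phat : ℕ) (a : Fin phat → VF N),
      (∀ j, ContDiff ℝ (⊤ : ℕ∞) (a j)) ∧
      (∀ z, LinearIndependent ℝ (fun j => a j z)) ∧
      invClosure v (Submodule.span (FF N) (Set.range ω))
        = Submodule.span (FF N) (Set.range a) ∧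
      -- the basis contains none of dx̄¹,…,dx̄^d …
      (∀ j z (i : Fin N), (i : ℕ) < d → a j z i = 0) ∧
      -- … and its coefficients are independent of x̄¹,…,x̄^d
      (∀ j (z z' : Pt N), (∀ i : Fin N, d ≤ (i : ℕ) → z i = z' i) → a j z = a j z') := by
  obtain ⟨phat, ωh, hs, hindep, hPhat⟩ := hreg
  have hInv := invClosure_invariant v (Submodule.span (FF N) (Set.range ω))
  have hsmooth : ∀ j, Differentiable ℝ (ωh j) := fun j => (hs j).differentiable (by simp)
  -- all elements of the closure have vanishing first d components
  have hvan : invClosure v (Submodule.span (FF N) (Set.range ω)) ≤ vanishMod N d := by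
    apply invClosure_le
    · rw [Submodule.span_le]
      rintro x ⟨j, rfl⟩ z i hi
      have h0 := congrFun (hann ⟨i.1, hi⟩ j) z
      rw [hv ⟨i.1, hi⟩] at h0
      simp only [contr] at h0
      have hcast : Fin.castLE hd ⟨i.1, hi⟩ = i := by apply Fin.ext; rfl
      rw [hcast] at h0
      rw [← sum_single_mul i (ω j z)]
      exact h0
    · intro i η hη
      rw [hv i, lieD_const]
      intro z k hk
      show fderiv ℝ (fun y => η y k) z (Pi.single (Fin.castLE hd i) 1) = 0
      have h0 : (fun y => η y k) = fun _ => (0:ℝ) := funext fun y => hη y k hk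
      rw [h0]
      simp
  -- the pointwise derivative membership
  have hderiv_mem : ∀ (i : Fin N), (i:ℕ) < d → ∀ j z,
      (fun k => fderiv ℝ (fun y => ωh j y k) z (Pi.single i (1:ℝ)))
        ∈ Submodule.span ℝ (Set.range fun j' => ωh j' z) := by
    intro i hi j z
    have hmem : ωh j ∈ invClosure v (Submodule.span (FF N) (Set.range ω)) := by
      rw [hPhat]; exact Submodule.subset_span ⟨j, rfl⟩
    have h2 := hInv ⟨i.1, hi⟩ (ωh j) hmem
    rw [hPhat, mem_spanFF_iff] at h2
    have h3 := h2 z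
    rw [hv ⟨i.1, hi⟩, lieD_const] at h3
    have hcast : Fin.castLE hd ⟨i.1, hi⟩ = i := by apply Fin.ext; rfl
    rw [hcast] at h3
    exact h3
  -- the pointwise span is constant along the first d coordinate directions
  have hline : ∀ (i : Fin N), (i:ℕ) < d → ∀ (y : Pt N) (st : ℝ),
      Submodule.span ℝ (Set.range fun j => ωh j (Function.update y i st))
        = Submodule.span ℝ (Set.range fun j => ωh j y) := by
    intro i hi y st
    have hγ : ∀ t : ℝ, HasDerivAt (fun s : ℝ => Function.update y i s)
        (Pi.single i (1:ℝ) : Pt N) t := by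
      intro t
      have heq : (fun s : ℝ => Function.update y i s)
          = fun s => y + (s - y i) • (Pi.single i 1 : Pt N) := by
        funext s k
        rcases eq_or_ne k i with rfl | hk
        · simp
        · simp [Function.update_of_ne hk, Pi.single_apply, hk]
      rw [heq]
      have h1 : HasDerivAt (fun s : ℝ => s - y i) 1 t := (hasDerivAt_id t).sub_const _
      have h2 := (h1.smul_const ((Pi.single i 1 : Pt N))).const_add y
      simpa using h2
    set F : ℝ → Fin phat → Pt N := fun t j => ωh j (Function.update y i t) with hF
    have hFd : ∀ j t, HasDerivAt (fun s => F s j)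
        (fun k => fderiv ℝ (fun y' => ωh j y' k) (Function.update y i t)
          (Pi.single i (1:ℝ))) t := by
      intro j t
      have hD := (hsmooth j (Function.update y i t)).hasFDerivAt
      have h2 := hD.comp_hasDerivAt t (hγ t)
      have h3 : (fun k => fderiv ℝ (fun y' => ωh j y' k) (Function.update y i t)
          (Pi.single i (1:ℝ)))
          = fderiv ℝ (ωh j) (Function.update y i t) (Pi.single i 1) := by
        funext k
        exact (fderiv_comp_proj (hsmooth j) _ _ k).symm
      rw [h3]
      exact h2
    have hspan := span_const_of_deriv_mem F
      (fun j t => ((hFd j t).differentiableAt))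
      (fun t => hindep _)
      (fun t j => by
        rw [(hFd j t).deriv]
        exact hderiv_mem i hi j _)
      st (y i)
    have hupd : Function.update y i (y i) = y := Function.update_eq_self i y
    calc Submodule.span ℝ (Set.range fun j => ωh j (Function.update y i st))
        = Submodule.span ℝ (Set.range (F st)) := rfl
      _ = Submodule.span ℝ (Set.range (F (y i))) := hspan
      _ = Submodule.span ℝ (Set.range fun j => ωh j y) := by
          show Submodule.span ℝ (Set.range fun j => ωh j (Function.update y i (y i))) = _
          rw [hupd]
  -- zeroing out the first d coordinates does not change the pointwise span
  have hzero : ∀ z : Pt N,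
      Submodule.span ℝ (Set.range fun j => ωh j (fun i : Fin N => if (i:ℕ) < d then 0 else z i))
        = Submodule.span ℝ (Set.range fun j => ωh j z) := by
    intro z
    have main : ∀ m : ℕ, m ≤ d →
        Submodule.span ℝ (Set.range fun j => ωh j (fun i : Fin N => if (i:ℕ) < m then 0 else z i))
          = Submodule.span ℝ (Set.range fun j => ωh j z) := by
      intro m
      induction m with
      | zero =>
        intro _
        have : (fun i : Fin N => if (i:ℕ) < 0 then 0 else z i) = z := by
          funext i; simp
        rw [this]
      | succ m ih =>
        intro hm
        have hmd : m < d := hm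
        have hmN : m < N := lt_of_lt_of_le hmd hd
        have hupd : (fun i : Fin N => if (i:ℕ) < m+1 then 0 else z i)
            = Function.update (fun i : Fin N => if (i:ℕ) < m then 0 else z i) ⟨m, hmN⟩ 0 := by
          funext i
          rcases eq_or_ne i ⟨m, hmN⟩ with rfl | hne
          · simp
          · have hvne : (i:ℕ) ≠ m := fun hh => hne (Fin.ext hh)
            rw [Function.update_of_ne hne]
            by_cases h2 : (i:ℕ) < m
            · simp [h2, Nat.lt_succ_of_lt h2]
            · have h3 : ¬ (i:ℕ) < m + 1 := by omega
              simp [h2, h3]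
        rw [hupd, hline ⟨m, hmN⟩ hmd _ 0, ih (le_of_lt hmd)]
    exact main d le_rfl
  -- the projection killing the first d coordinates
  set projd : (Pt N) →L[ℝ] (Pt N) := ContinuousLinearMap.pi
    (fun i : Fin N => if (i:ℕ) < d then 0 else ContinuousLinearMap.proj i) with hprojd
  have hproj_apply : ∀ (z : Pt N) (i : Fin N),
      projd z i = if (i:ℕ) < d then 0 else z i := by
    intro z i
    rw [hprojd, ContinuousLinearMap.pi_apply]
    by_cases hcase : (i:ℕ) < d
    · simp [hcase]
    · simp [hcase]
  have hprojz : ∀ z : Pt N, projd z = fun i : Fin N => if (i:ℕ) < d then 0 else z i :=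
    fun z => funext (hproj_apply z)
  refine ⟨phat, fun j z => ωh j (projd z), ?_, ?_, ?_, ?_, ?_⟩
  · intro j
    exact (hs j).comp projd.contDiff
  · intro z
    exact hindep (projd z)
  · rw [hPhat]
    ext η
    rw [mem_spanFF_iff, mem_spanFF_iff]
    refine forall_congr' fun z => ?_
    have h1 : Submodule.span ℝ (Set.range fun j => ωh j (projd z))
        = Submodule.span ℝ (Set.range fun j => ωh j z) := by
      rw [hprojz z]
      exact hzero z
    rw [h1]
  · intro j z i hi
    have hmem : ωh j ∈ invClosure v (Submodule.span (FF N) (Set.range ω)) := by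
      rw [hPhat]; exact Submodule.subset_span ⟨j, rfl⟩
    exact hvan hmem (projd z) i hi
  · intro j z z' hzz
    have hpp : projd z = projd z' := by
      funext i
      rw [hproj_apply, hproj_apply]
      by_cases hcase : (i:ℕ) < d
      · simp [hcase]
      · simp [hcase, hzz i (le_of_not_gt hcase)]
    show ωh j (projd z) = ωh j (projd z')
    rw [hpp]
end
end

section
/- The discrete-time system x¹⁺ = u¹ − x², x²⁺ = x¹(u¹ − u²), x³⁺ = u² is forward-flat around the equilibrium x₀ = (1/2, 1/2, 0), u₀ = (1,0), with flat output y = (x¹ − x³, x²). Explicitly, defining y_[k] as the k-th forward shift of y along the system dynamics (so y_[1]¹ = u¹ − x² − u², y_[1]² = x¹(u¹ − u²), y_[2]¹ = u_[1]¹ − x¹(u¹ − u²) − u_[1]², y_[2]² = (u¹ − x²)(u_[1]¹ − u_[1]²)), the following identities hold for all (x,u,u_[1]) in a neighborhood of the equilibrium where the denominators are nonzero: x¹ = y_[1]²/(y_[1]¹ + y²), x² = y², x³ = −(y¹y_[1]¹ + y¹y² − y_[1]²)/(y_[1]¹ + y²), u¹ = (y_[2]¹y² + y²y_[1]² + y_[2]²)/(y_[2]¹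 + y_[1]²), u² = −(y_[1]¹y_[2]¹ + y_[1]¹y_[1]² − y_[2]²)/(y_[2]¹ + y_[1]²). -/
noncomputable section
open Function Filter Topology

variable {X U Y : Type*}

/-- Forward-shift operator on the extended state-input space `X × (ℕ → U)`:
`δ(x, (u, u_[1], u_[2], …)) = (f(x,u), (u_[1], u_[2], …))`. -/
def sysShift (f : X → U → X) : X × (ℕ → U) → X × (ℕ → U) :=
  fun p => (f p.1 (p.2 0), fun k => p.2 (k + 1))

/-- `k`-th forward shift of an output function along the system dynamics. -/
def shiftOut (f : X → U → X) (φ : X × (ℕ → U) → Y) (k : ℕ) : X × (ℕ → U) → Y :=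
  fun p => φ ((sysShift f)^[k] p)

variable [NormedAddCommGroup X] [NormedSpace ℝ X] [NormedAddCommGroup U] [NormedSpace ℝ U]
  [NormedAddCommGroup Y] [NormedSpace ℝ Y]

/-- `φ` is a flat output of the discrete-time system `x⁺ = f(x,u)` around the
equilibrium `(x₀,u₀)`: it depends (smoothly, near the equilibrium) only on
`x, u, u_[1], …, u_[q]` for some finite `q`, and all states and inputs can be expressed
locally around the equilibrium by smooth functions of `φ` and its forward shifts
up to some finite order `R`. -/
def IsFlatOutput (f : X → U → X) (x₀ : X) (u₀ : U) (φ : X × (ℕ → U) → Y) : Prop :=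
  (∃ (q : ℕ) (ψ : X × (Fin (q+1) → U) → Y),
      ContDiffAt ℝ (⊤ : ℕ∞) ψ (x₀, fun _ => u₀) ∧ ∀ p, φ p = ψ (p.1, fun i => p.2 i)) ∧
  ∃ (R : ℕ) (Fx : (Fin R → Y) → X) (Fu : (Fin (R+1) → Y) → U),
    ContDiffAt ℝ (⊤ : ℕ∞) Fx (fun j => shiftOut f φ (j : ℕ) ((x₀, fun _ => u₀) : X × (ℕ → U))) ∧
    ContDiffAt ℝ (⊤ : ℕ∞) Fu (fun j => shiftOut f φ (j : ℕ) ((x₀, fun _ => u₀) : X × (ℕ → U))) ∧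
    ∀ᶠ p in nhds ((x₀, fun _ => u₀) : X × (ℕ → U)),
      p.1 = Fx (fun j => shiftOut f φ (j : ℕ) p) ∧
      p.2 0 = Fu (fun j => shiftOut f φ (j : ℕ) p)

/-- Forward-flatness of `x⁺ = f(x,u)` around the equilibrium `(x₀,u₀)`:
existence of a flat output with `dim(y) = dim(u)` components. -/
def IsForwardFlat (f : X → U → X) (x₀ : X) (u₀ : U) : Prop :=
  ∃ φ : X × (ℕ → U) → U, IsFlatOutput f x₀ u₀ φ

/-- The rank of a continuous linear map. -/
def clmRank {E F : Type*} [NormedAddCommGroup E] [NormedSpace ℝ E]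
    [NormedAddCommGroup F] [NormedSpace ℝ F] (L : E →L[ℝ] F) : ℕ :=
  Module.finrank ℝ (LinearMap.range L.toLinearMap)

/-- Examples 1 and 2 of the paper: the discrete-time system
`x¹⁺ = u¹ − x²`, `x²⁺ = x¹(u¹ − u²)`, `x³⁺ = u²` is forward-flat around the equilibrium
`x₀ = (1/2, 1/2, 0)`, `u₀ = (1,0)`, with flat output `y = (x¹ − x³, x²)`, and the
parameterizing identities (4) of the paper hold wherever the denominators are nonzero. -/
theorem running_example_forward_flat
    (f : (Fin 3 → ℝ) → (Fin 2 → ℝ) → (Fin 3 → ℝ))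
    (hf : f = fun x u => ![u 0 - x 1, x 0 * (u 0 - u 1), u 1])
    (x₀ : Fin 3 → ℝ) (hx₀ : x₀ = ![1/2, 1/2, 0])
    (u₀ : Fin 2 → ℝ) (hu₀ : u₀ = ![1, 0])
    (φ : (Fin 3 → ℝ) × (ℕ → Fin 2 → ℝ) → Fin 2 → ℝ)
    (hφ : φ = fun p => ![p.1 0 - p.1 2, p.1 1]) :
    -- `(x₀,u₀)` is an equilibrium
    f x₀ u₀ = x₀ ∧
    -- `y = (x¹ − x³, x²)` is a flat output, so the system is forward-flat
    IsFlatOutput f x₀ u₀ φ ∧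
    -- the explicit parameterization by the flat output:
    -- with y¹ = x¹ − x³, y² = x², y_[1]¹ = u¹ − x² − u², y_[1]² = x¹(u¹ − u²),
    -- y_[2]¹ = u_[1]¹ − x¹(u¹ − u²) − u_[1]², y_[2]² = (u¹ − x²)(u_[1]¹ − u_[1]²)
    (∀ (x : Fin 3 → ℝ) (u u₁ : Fin 2 → ℝ),
      (u 0 - x 1 - u 1) + x 1 ≠ 0 →
      (u₁ 0 - x 0 * (u 0 - u 1) - u₁ 1) + x 0 * (u 0 - u 1) ≠ 0 →
      x 0 = (x 0 * (u 0 - u 1)) / ((u 0 - x 1 - u 1) + x 1) ∧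
      x 1 = x 1 ∧
      x 2 = -((x 0 - x 2) * (u 0 - x 1 - u 1) + (x 0 - x 2) * x 1 - x 0 * (u 0 - u 1))
              / ((u 0 - x 1 - u 1) + x 1) ∧
      u 0 = ((u₁ 0 - x 0 * (u 0 - u 1) - u₁ 1) * x 1 + x 1 * (x 0 * (u 0 - u 1))
              + (u 0 - x 1) * (u₁ 0 - u₁ 1))
              / ((u₁ 0 - x 0 * (u 0 - u 1) - u₁ 1) + x 0 * (u 0 - u 1)) ∧
      u 1 = -((u 0 - x 1 - u 1) * (u₁ 0 - x 0 * (u 0 - u 1) - u₁ 1)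
              + (u 0 - x 1 - u 1) * (x 0 * (u 0 - u 1)) - (u 0 - x 1) * (u₁ 0 - u₁ 1))
              / ((u₁ 0 - x 0 * (u 0 - u 1) - u₁ 1) + x 0 * (u 0 - u 1))) := by
  subst hf hx₀ hu₀ hφ
  have heq : (fun x u => ![u 0 - x 1, x 0 * (u 0 - u 1), u 1]) ![(1:ℝ)/2, 1/2, 0] ![(1:ℝ), 0]
      = ![(1:ℝ)/2, 1/2, 0] := by
    funext i; fin_cases i <;> norm_num
  refine ⟨heq, ⟨⟨0, fun p => ![p.1 0 - p.1 2, p.1 1], ?_, fun p => rfl⟩, ?_⟩, ?_⟩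
  · apply ContDiff.contDiffAt
    rw [contDiff_pi]
    intro i
    fin_cases i <;> simp <;> fun_prop
  · have hfix : sysShift (fun x u => ![u 0 - x 1, x 0 * (u 0 - u 1), u 1])
        ((![(1:ℝ)/2, 1/2, 0], fun _ => ![(1:ℝ), 0]) : (Fin 3 → ℝ) × (ℕ → Fin 2 → ℝ))
        = (![(1:ℝ)/2, 1/2, 0], fun _ => ![(1:ℝ), 0]) := by
      simp only [sysShift]
      exact Prod.ext heq rfl
    have hso : ∀ k : ℕ, shiftOut (fun x u => ![u 0 - x 1, x 0 * (u 0 - u 1), u 1])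
        (fun p => ![p.1 0 - p.1 2, p.1 1]) k
        ((![(1:ℝ)/2, 1/2, 0], fun _ => ![(1:ℝ), 0]) : (Fin 3 → ℝ) × (ℕ → Fin 2 → ℝ))
        = ![(1:ℝ)/2, 1/2] := by
      intro k
      simp only [shiftOut, Function.iterate_fixed hfix]
      funext i; fin_cases i <;> norm_num <;> rfl
    refine ⟨2,
      fun y => ![y 1 1 / (y 1 0 + y 0 1), y 0 1,
        -(y 0 0 * y 1 0 + y 0 0 * y 0 1 - y 1 1) / (y 1 0 + y 0 1)],
      fun y => ![(y 2 0 * y 0 1 + y 0 1 * y 1 1 + y 2 1) / (y 2 0 + y 1 1),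
        -(y 1 0 * y 2 0 + y 1 0 * y 1 1 - y 2 1) / (y 2 0 + y 1 1)], ?_, ?_, ?_⟩
    · apply contDiffAt_pi.2
      intro i
      have hden : ((fun j : Fin 2 => shiftOut (fun x u => ![u 0 - x 1, x 0 * (u 0 - u 1), u 1])
          (fun p => ![p.1 0 - p.1 2, p.1 1]) (j : ℕ)
          ((![(1:ℝ)/2, 1/2, 0], fun _ => ![(1:ℝ), 0]) : (Fin 3 → ℝ) × (ℕ → Fin 2 → ℝ))) 1 0
          + (fun j : Fin 2 => shiftOut (fun x u => ![u 0 - x 1, x 0 * (u 0 - u 1), u 1])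
          (fun p => ![p.1 0 - p.1 2, p.1 1]) (j : ℕ)
          ((![(1:ℝ)/2, 1/2, 0], fun _ => ![(1:ℝ), 0]) : (Fin 3 → ℝ) × (ℕ → Fin 2 → ℝ))) 0 1)
          ≠ 0 := by
        simp only [hso]
        norm_num
      fin_cases i <;> simp only [Matrix.cons_val_zero, Matrix.cons_val_one, Matrix.head_cons,
          Matrix.cons_val_two, Matrix.tail_cons, Fin.mk_one, Fin.mk_zero, Fin.isValue]
      · exact ContDiffAt.div (ContDiff.contDiffAt (by fun_prop))
          (ContDiff.contDiffAt (by fun_prop)) hden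
      · exact ContDiff.contDiffAt (by fun_prop)
      · exact ContDiffAt.div (ContDiff.contDiffAt (by fun_prop))
          (ContDiff.contDiffAt (by fun_prop)) hden
    · apply contDiffAt_pi.2
      intro i
      have hden : ((fun j : Fin 3 => shiftOut (fun x u => ![u 0 - x 1, x 0 * (u 0 - u 1), u 1])
          (fun p => ![p.1 0 - p.1 2, p.1 1]) (j : ℕ)
          ((![(1:ℝ)/2, 1/2, 0], fun _ => ![(1:ℝ), 0]) : (Fin 3 → ℝ) × (ℕ → Fin 2 → ℝ))) 2 0
          + (fun j : Fin 3 => shiftOut (fun x u => ![u 0 - x 1, x 0 * (u 0 - u 1), u 1])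
          (fun p => ![p.1 0 - p.1 2, p.1 1]) (j : ℕ)
          ((![(1:ℝ)/2, 1/2, 0], fun _ => ![(1:ℝ), 0]) : (Fin 3 → ℝ) × (ℕ → Fin 2 → ℝ))) 1 1)
          ≠ 0 := by
        simp only [hso]
        norm_num
      fin_cases i <;> simp only [Matrix.cons_val_zero, Matrix.cons_val_one, Matrix.head_cons,
          Fin.mk_one, Fin.mk_zero, Fin.isValue]
      · exact ContDiffAt.div (ContDiff.contDiffAt (by fun_prop))
          (ContDiff.contDiffAt (by fun_prop)) hden
      · exact ContDiffAt.div (ContDiff.contDiffAt (by fun_prop))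
          (ContDiff.contDiffAt (by fun_prop)) hden
    · have hopen : IsOpen {p : (Fin 3 → ℝ) × (ℕ → Fin 2 → ℝ) |
          p.2 0 0 - p.2 0 1 ≠ 0 ∧ p.2 1 0 - p.2 1 1 ≠ 0} :=
        IsOpen.inter
          ((show Continuous (fun p : (Fin 3 → ℝ) × (ℕ → Fin 2 → ℝ) => p.2 0 0 - p.2 0 1) by
            fun_prop).isOpen_preimage {y | y ≠ 0} isOpen_ne)
          ((show Continuous (fun p : (Fin 3 → ℝ) × (ℕ → Fin 2 → ℝ) => p.2 1 0 - p.2 1 1) by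
            fun_prop).isOpen_preimage {y | y ≠ 0} isOpen_ne)
      have hmem : ((![(1:ℝ)/2, 1/2, 0], fun _ => ![(1:ℝ), 0]) : (Fin 3 → ℝ) × (ℕ → Fin 2 → ℝ))
          ∈ {p : (Fin 3 → ℝ) × (ℕ → Fin 2 → ℝ) |
          p.2 0 0 - p.2 0 1 ≠ 0 ∧ p.2 1 0 - p.2 1 1 ≠ 0} := by
        constructor <;> norm_num
      filter_upwards [hopen.mem_nhds hmem] with p hp
      obtain ⟨h1, h2⟩ := hp
      constructor
      · funext i
        fin_cases i <;> simp [shiftOut, sysShift] <;>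
          rw [eq_div_iff (by intro h; exact h1 (by linear_combination h))] <;> ring
      · funext i
        fin_cases i <;> simp [shiftOut, sysShift] <;>
          rw [eq_div_iff (by intro h; exact h2 (by linear_combination h))] <;> ring
  · intro x u u₁ h1 h2
    refine ⟨?_, rfl, ?_, ?_, ?_⟩ <;> rw [eq_div_iff (by assumption)] <;> ring
end
end

section
/- The discrete-time system x¹⁺ = x²(u¹+1), x²⁺ = u¹, x³⁺ = x⁴ + u² − 1, x⁴⁺ = x⁵ + 1 − x¹(u¹+1)/(x²+1), x⁵⁺ = x² + u² is forward-flat around the equilibrium x₀ = (0,0,0,1,0), u₀ = (0,0), and a flat output is given by y = (x¹/(x²+1), x³ − x⁵). -/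
noncomputable section
open Function Filter Topology

variable {X U Y : Type*}

variable [NormedAddCommGroup X] [NormedSpace ℝ X] [NormedAddCommGroup U] [NormedSpace ℝ U]
  [NormedAddCommGroup Y] [NormedSpace ℝ Y]

/-- academic example, Section 6.1 of the paper: the discrete-time
system `x¹⁺ = x²(u¹+1)`, `x²⁺ = u¹`, `x³⁺ = x⁴ + u² − 1`,
`x⁴⁺ = x⁵ + 1 − x¹(u¹+1)/(x²+1)`, `x⁵⁺ = x² + u²` is forward-flat around the
equilibrium `x₀ = (0,0,0,1,0)`, `u₀ = (0,0)`, and a flat output is given by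
`y = (x¹/(x²+1), x³ − x⁵)`. -/
theorem academic_example_forward_flat
    (f : (Fin 5 → ℝ) → (Fin 2 → ℝ) → (Fin 5 → ℝ))
    (hf : f = fun x u =>
      ![x 1 * (u 0 + 1),
        u 0,
        x 3 + u 1 - 1,
        x 4 + 1 - x 0 * (u 0 + 1) / (x 1 + 1),
        x 1 + u 1])
    (x₀ : Fin 5 → ℝ) (hx₀ : x₀ = ![0, 0, 0, 1, 0])
    (u₀ : Fin 2 → ℝ) (hu₀ : u₀ = ![0, 0])
    (φ : (Fin 5 → ℝ) × (ℕ → Fin 2 → ℝ) → Fin 2 → ℝ)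
    (hφ : φ = fun p => ![p.1 0 / (p.1 1 + 1), p.1 2 - p.1 4]) :
    -- `(x₀,u₀)` is an equilibrium
    f x₀ u₀ = x₀ ∧
    -- `y = (x¹/(x²+1), x³ − x⁵)` is a flat output, so the system is forward-flat
    IsFlatOutput f x₀ u₀ φ ∧ IsForwardFlat f x₀ u₀ := by

  subst hf hx₀ hu₀ hφ
  have heq : (fun x u =>
      ![x 1 * (u 0 + 1), u 0, x 3 + u 1 - 1,
        x 4 + 1 - x 0 * (u 0 + 1) / (x 1 + 1), x 1 + u 1])
      ![(0:ℝ), 0, 0, 1, 0] ![(0:ℝ), 0] = ![(0:ℝ), 0, 0, 1, 0] := by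
    funext i
    fin_cases i <;> simp
  have hflat : IsFlatOutput
      (fun x u =>
        ![x 1 * (u 0 + 1), u 0, x 3 + u 1 - 1,
          x 4 + 1 - x 0 * (u 0 + 1) / (x 1 + 1), x 1 + u 1])
      ![(0:ℝ), 0, 0, 1, 0] ![(0:ℝ), 0]
      (fun p => ![p.1 0 / (p.1 1 + 1), p.1 2 - p.1 4]) := by
    constructor
    · refine ⟨0, fun q => ![q.1 0 / (q.1 1 + 1), q.1 2 - q.1 4], ?_, fun p => rfl⟩
      apply contDiffAt_pi.2
      intro i
      fin_cases i
      · simp only [Matrix.cons_val_zero]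
        exact ContDiffAt.div (by fun_prop) (by fun_prop) (by norm_num)
      · show ContDiffAt ℝ (⊤:ℕ∞) (fun q : (Fin 5 → ℝ) × (Fin 1 → Fin 2 → ℝ) => q.1 2 - q.1 4) _
        fun_prop
    · refine ⟨3,
        (fun Y => ![Y 0 0 * (Y 1 0 + 1), Y 1 0,
            Y 0 1 + (Y 2 1 + Y 0 0 * (Y 2 0 + 1) + Y 2 0),
            Y 1 1 + Y 1 0 + 1,
            Y 2 1 + Y 0 0 * (Y 2 0 + 1) + Y 2 0]),
        (fun Y => ![Y 2 0, Y 3 1 + Y 1 0 * Y 3 0 + Y 3 0]), ?_, ?_, ?_⟩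
      · apply ContDiff.contDiffAt
        apply contDiff_pi.2
        intro i
        fin_cases i <;> simp <;> fun_prop
      · apply ContDiff.contDiffAt
        apply contDiff_pi.2
        intro i
        fin_cases i <;> simp <;> fun_prop
      · have hopen : IsOpen {p : (Fin 5 → ℝ) × (ℕ → Fin 2 → ℝ) |
            p.1 1 + 1 ≠ 0 ∧ p.2 0 0 + 1 ≠ 0 ∧ p.2 1 0 + 1 ≠ 0 ∧ p.2 2 0 + 1 ≠ 0} := by
          have h1 : Continuous fun p : (Fin 5 → ℝ) × (ℕ → Fin 2 → ℝ) => p.1 1 + 1 := by fun_prop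
          have h2 : ∀ k : ℕ, Continuous fun p : (Fin 5 → ℝ) × (ℕ → Fin 2 → ℝ) => p.2 k 0 + 1 := by
            intro k; fun_prop
          rw [Set.setOf_and, Set.setOf_and, Set.setOf_and]
          exact (isOpen_compl_singleton.preimage h1).inter
            ((isOpen_compl_singleton.preimage (h2 0)).inter
            ((isOpen_compl_singleton.preimage (h2 1)).inter
              (isOpen_compl_singleton.preimage (h2 2))))
        have hmem : ((![(0:ℝ),0,0,1,0], fun _ => ![(0:ℝ),0]) : (Fin 5 → ℝ) × (ℕ → Fin 2 → ℝ)) ∈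
            {p : (Fin 5 → ℝ) × (ℕ → Fin 2 → ℝ) |
            p.1 1 + 1 ≠ 0 ∧ p.2 0 0 + 1 ≠ 0 ∧ p.2 1 0 + 1 ≠ 0 ∧ p.2 2 0 + 1 ≠ 0} := by
          norm_num
        filter_upwards [hopen.mem_nhds hmem] with p hp
        obtain ⟨hd1, hd2, hd3, hd4⟩ := hp
        have it2 : ∀ q : (Fin 5 → ℝ) × (ℕ → Fin 2 → ℝ),
            (sysShift (fun x u =>
              ![x 1 * (u 0 + 1), u 0, x 3 + u 1 - 1,
                x 4 + 1 - x 0 * (u 0 + 1) / (x 1 + 1), x 1 + u 1]))^[2] q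
            = sysShift (fun x u =>
              ![x 1 * (u 0 + 1), u 0, x 3 + u 1 - 1,
                x 4 + 1 - x 0 * (u 0 + 1) / (x 1 + 1), x 1 + u 1]) (sysShift (fun x u =>
              ![x 1 * (u 0 + 1), u 0, x 3 + u 1 - 1,
                x 4 + 1 - x 0 * (u 0 + 1) / (x 1 + 1), x 1 + u 1]) q) := fun q => rfl
        have it3 : ∀ q : (Fin 5 → ℝ) × (ℕ → Fin 2 → ℝ),
            (sysShift (fun x u =>
              ![x 1 * (u 0 + 1), u 0, x 3 + u 1 - 1,
                x 4 + 1 - x 0 * (u 0 + 1) / (x 1 + 1), x 1 + u 1]))^[3] q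
            = sysShift (fun x u =>
              ![x 1 * (u 0 + 1), u 0, x 3 + u 1 - 1,
                x 4 + 1 - x 0 * (u 0 + 1) / (x 1 + 1), x 1 + u 1]) (sysShift (fun x u =>
              ![x 1 * (u 0 + 1), u 0, x 3 + u 1 - 1,
                x 4 + 1 - x 0 * (u 0 + 1) / (x 1 + 1), x 1 + u 1]) (sysShift (fun x u =>
              ![x 1 * (u 0 + 1), u 0, x 3 + u 1 - 1,
                x 4 + 1 - x 0 * (u 0 + 1) / (x 1 + 1), x 1 + u 1]) q)) := fun q => rfl
        have v2 : ((2 : Fin 3) : ℕ) = 2 := rfl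
        have v2' : ((2 : Fin 4) : ℕ) = 2 := rfl
        have v3 : ((3 : Fin 4) : ℕ) = 3 := rfl
        have e2 : (⟨2, by norm_num⟩ : Fin 5) = 2 := rfl
        have e3 : (⟨3, by norm_num⟩ : Fin 5) = 3 := rfl
        have e4 : (⟨4, by norm_num⟩ : Fin 5) = 4 := rfl
        constructor
        · funext i
          fin_cases i <;>
            simp only [shiftOut, Function.iterate_zero_apply, Function.iterate_one, it2, it3,
              sysShift, Matrix.cons_val_zero, Matrix.cons_val_one, Matrix.head_cons,
              Matrix.cons_val_two, Matrix.tail_cons, Matrix.cons_val_three,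
              Matrix.cons_val_four, Fin.isValue, Fin.val_zero, Fin.val_one, Fin.val_two,
              e2, e3, e4, v2, v2', v3, Fin.mk_one, Fin.zero_eta, Matrix.cons_val] <;>
            (field_simp; try ring)
        · funext i
          fin_cases i <;>
            simp only [shiftOut, Function.iterate_zero_apply, Function.iterate_one, it2, it3,
              sysShift, Matrix.cons_val_zero, Matrix.cons_val_one, Matrix.head_cons,
              Matrix.cons_val_two, Matrix.tail_cons, Matrix.cons_val_three,
              Matrix.cons_val_four, Fin.isValue, Fin.val_zero, Fin.val_one, Fin.val_two,
              e2, e3, e4, v2, v2', v3, Fin.mk_one, Fin.zero_eta, Matrix.cons_val] <;>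
            (field_simp; try ring)
  exact ⟨heq, hflat, ⟨_, hflat⟩⟩
end
end

section
/- For any sampling time T_s > 0 and parameter ε, the Euler-discretized VTOL aircraft system x¹⁺ = x¹ + T_s x³, x²⁺ = x² + T_s x⁴, x³⁺ = x³ + T_s sin(x⁵)(ε(x⁶)² − u¹), x⁴⁺ = x⁴ + T_s cos(x⁵)(−ε(x⁶)² + u¹) − T_s, x⁵⁺ = x⁵ + T_s x⁶, x⁶⁺ = x⁶ + T_s u² is forward-flat around any equilibrium of the form x₀ = (x₀¹, x₀², 0, 0, 0, 0), u₀ = (1, 0), with flat output y = (x¹, x²). -/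
noncomputable section
open Function Filter Topology

variable {X U Y : Type*}

variable [NormedAddCommGroup X] [NormedSpace ℝ X] [NormedAddCommGroup U] [NormedSpace ℝ U]
  [NormedAddCommGroup Y] [NormedSpace ℝ Y]

/-! ### Auxiliary lemmas for the VTOL example -/

lemma sysShift_snd_iterate {α β : Type*} (f : α → β → α) (p : α × (ℕ → β)) :
    ∀ k : ℕ, ((sysShift f)^[k] p).2 = fun j => p.2 (j + k)
  | 0 => rfl
  | (k+1) => by
      funext j
      rw [Function.iterate_succ_apply']
      show ((sysShift f)^[k] p).2 (j + 1) = _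
      rw [sysShift_snd_iterate f p k]
      exact congrArg p.2 (by omega)

lemma sysShift_fst_succ {α β : Type*} (f : α → β → α) (p : α × (ℕ → β)) (k : ℕ) :
    ((sysShift f)^[k+1] p).1 = f ((sysShift f)^[k] p).1 (p.2 k) := by
  rw [Function.iterate_succ_apply']
  show f ((sysShift f)^[k] p).1 (((sysShift f)^[k] p).2 0) = _
  simp only [sysShift_snd_iterate, Nat.zero_add]

lemma shiftOut_fixed {α β γ : Type*} (f : α → β → α) (φ : α × (ℕ → β) → γ)
    (p : α × (ℕ → β)) (hp : sysShift f p = p) (k : ℕ) : shiftOut f φ k p = φ p := by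
  unfold shiftOut; rw [Function.iterate_fixed hp]

set_option maxHeartbeats 1600000
/-- auxiliary: recover the pitch angle from three consecutive flat-output values -/
def vthAux (Ts : ℝ) (a b c : Fin 2 → ℝ) : ℝ :=
  Real.arctan (-((c 0 - 2*b 0 + a 0)/Ts^2) / ((c 1 - 2*b 1 + a 1)/Ts^2 + 1))

lemma vthAux_eq (Ts : ℝ) (hTs : Ts ≠ 0) (θ v : ℝ)
    (hθ1 : -(Real.pi/2) < θ) (hθ2 : θ < Real.pi/2) (hv : 0 < v)
    (a b c : Fin 2 → ℝ)
    (h0 : c 0 - 2*b 0 + a 0 = Ts^2 * (-(Real.sin θ * v)))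
    (h1 : c 1 - 2*b 1 + a 1 = Ts^2 * (Real.cos θ * v - 1)) :
    vthAux Ts a b c = θ := by
  have hTs2 : (Ts:ℝ)^2 ≠ 0 := pow_ne_zero _ hTs
  unfold vthAux
  rw [h0, h1]
  have e1 : Ts^2 * (Real.cos θ * v - 1) / Ts^2 + 1 = Real.cos θ * v := by
    field_simp; ring
  have e2 : -(Ts^2 * (-(Real.sin θ * v)) / Ts^2) = Real.sin θ * v := by
    field_simp
  rw [e1, e2, mul_div_mul_right _ _ hv.ne', ← Real.tan_eq_sin_div_cos,
    Real.arctan_tan hθ1 hθ2]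

lemma vthAux_self (Ts : ℝ) (w : Fin 2 → ℝ) : vthAux Ts w w w = 0 := by
  have h0 : w 0 - 2*w 0 + w 0 = 0 := by ring
  have h1 : w 1 - 2*w 1 + w 1 = 0 := by ring
  simp [vthAux, h0, h1]

lemma vthAux_contDiffAt {N : ℕ} (Ts : ℝ) (i j k : Fin N) (z₀ : Fin N → Fin 2 → ℝ)
    (hden : (z₀ k 1 - 2*z₀ j 1 + z₀ i 1)/Ts^2 + 1 ≠ 0) :
    ContDiffAt ℝ (⊤:ℕ∞) (fun z : Fin N → Fin 2 → ℝ => vthAux Ts (z i) (z j) (z k)) z₀ := by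
  have P : ∀ (a : Fin N) (c : Fin 2), ContDiff ℝ ((⊤:ℕ∞) : WithTop ℕ∞)
      (fun z : Fin N → Fin 2 → ℝ => z a c) := fun a c => contDiff_apply_apply _ _ _ _
  have hnum : ContDiffAt ℝ (⊤:ℕ∞)
      (fun z : Fin N → Fin 2 → ℝ => -((z k 0 - 2*z j 0 + z i 0)/Ts^2)) z₀ :=
    (((((P k 0).sub (contDiff_const.mul (P j 0))).add (P i 0)).div_const _).neg).contDiffAt
  have hden' : ContDiffAt ℝ (⊤:ℕ∞)
      (fun z : Fin N → Fin 2 → ℝ => (z k 1 - 2*z j 1 + z i 1)/Ts^2 + 1) z₀ :=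
    (((((P k 1).sub (contDiff_const.mul (P j 1))).add (P i 1)).div_const _).add contDiff_const).contDiffAt
  exact (hnum.div hden' hden).arctan

/-- the map expressing the state from the flat output and its shifts -/
def vFx (Ts : ℝ) : (Fin 4 → Fin 2 → ℝ) → (Fin 6 → ℝ) := fun z =>
  ![z 0 0, z 0 1, (z 1 0 - z 0 0)/Ts, (z 1 1 - z 0 1)/Ts,
    vthAux Ts (z 0) (z 1) (z 2),
    (vthAux Ts (z 1) (z 2) (z 3) - vthAux Ts (z 0) (z 1) (z 2))/Ts]

/-- the map expressing the input from the flat output and its shifts -/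
def vFu (Ts ε : ℝ) : (Fin 5 → Fin 2 → ℝ) → (Fin 2 → ℝ) := fun z =>
  ![((z 2 1 - 2*z 1 1 + z 0 1)/Ts^2 + 1)/Real.cos (vthAux Ts (z 0) (z 1) (z 2))
      + ε * ((vthAux Ts (z 1) (z 2) (z 3) - vthAux Ts (z 0) (z 1) (z 2))/Ts)^2,
    (vthAux Ts (z 2) (z 3) (z 4) - 2*vthAux Ts (z 1) (z 2) (z 3)
      + vthAux Ts (z 0) (z 1) (z 2))/Ts^2]

lemma vFx_contDiffAt (Ts : ℝ) (w : Fin 2 → ℝ) :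
    ContDiffAt ℝ (⊤:ℕ∞) (vFx Ts) (fun _ => w) := by
  have hd : (w 1 - 2*w 1 + w 1)/Ts^2 + 1 ≠ 0 := by
    rw [show w 1 - 2*w 1 + w 1 = 0 by ring]; norm_num
  have P : ∀ (a : Fin 4) (c : Fin 2), ContDiff ℝ ((⊤:ℕ∞) : WithTop ℕ∞)
      (fun z : Fin 4 → Fin 2 → ℝ => z a c) := fun a c => contDiff_apply_apply _ _ _ _
  apply contDiffAt_pi.mpr
  intro i
  fin_cases i <;> simp only [vFx, Matrix.cons_val_zero, Matrix.cons_val_one, Matrix.head_cons,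
    Matrix.cons_val_two, Matrix.tail_cons, Matrix.cons_val_three, Matrix.cons_val_four,
    Matrix.cons_val_fin_one, Fin.isValue]
  · exact (P 0 0).contDiffAt
  · exact (P 0 1).contDiffAt
  · exact (((P 1 0).sub (P 0 0)).div_const Ts).contDiffAt
  · exact (((P 1 1).sub (P 0 1)).div_const Ts).contDiffAt
  · exact vthAux_contDiffAt Ts 0 1 2 _ hd
  · exact ((vthAux_contDiffAt Ts 1 2 3 _ hd).sub (vthAux_contDiffAt Ts 0 1 2 _ hd)).div_const Ts

lemma vFu_contDiffAt (Ts ε : ℝ) (w : Fin 2 → ℝ) :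
    ContDiffAt ℝ (⊤:ℕ∞) (vFu Ts ε) (fun _ => w) := by
  have hd : (w 1 - 2*w 1 + w 1)/Ts^2 + 1 ≠ 0 := by
    rw [show w 1 - 2*w 1 + w 1 = 0 by ring]; norm_num
  have P : ∀ (a : Fin 5) (c : Fin 2), ContDiff ℝ ((⊤:ℕ∞) : WithTop ℕ∞)
      (fun z : Fin 5 → Fin 2 → ℝ => z a c) := fun a c => contDiff_apply_apply _ _ _ _
  have T0 : ContDiffAt ℝ (⊤:ℕ∞)
      (fun z : Fin 5 → Fin 2 → ℝ => vthAux Ts (z 0) (z 1) (z 2)) (fun _ => w) :=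
    vthAux_contDiffAt Ts 0 1 2 _ hd
  have T1 : ContDiffAt ℝ (⊤:ℕ∞)
      (fun z : Fin 5 → Fin 2 → ℝ => vthAux Ts (z 1) (z 2) (z 3)) (fun _ => w) :=
    vthAux_contDiffAt Ts 1 2 3 _ hd
  have T2 : ContDiffAt ℝ (⊤:ℕ∞)
      (fun z : Fin 5 → Fin 2 → ℝ => vthAux Ts (z 2) (z 3) (z 4)) (fun _ => w) :=
    vthAux_contDiffAt Ts 2 3 4 _ hd
  have hcos : Real.cos (vthAux Ts w w w) ≠ 0 := by
    rw [vthAux_self]; norm_num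
  have hnum : ContDiffAt ℝ (⊤:ℕ∞)
      (fun z : Fin 5 → Fin 2 → ℝ => (z 2 1 - 2*z 1 1 + z 0 1)/Ts^2 + 1) (fun _ => w) :=
    (((((P 2 1).sub (contDiff_const.mul (P 1 1))).add (P 0 1)).div_const _).add
      contDiff_const).contDiffAt
  have hq : ContDiffAt ℝ (⊤:ℕ∞)
      (fun z : Fin 5 → Fin 2 → ℝ =>
        ((z 2 1 - 2*z 1 1 + z 0 1)/Ts^2 + 1)/Real.cos (vthAux Ts (z 0) (z 1) (z 2))) (fun _ => w) :=
    hnum.div T0.cos hcos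
  have hr : ContDiffAt ℝ (⊤:ℕ∞)
      (fun z : Fin 5 → Fin 2 → ℝ =>
        ε * ((vthAux Ts (z 1) (z 2) (z 3) - vthAux Ts (z 0) (z 1) (z 2))/Ts)^2) (fun _ => w) :=
    contDiffAt_const.mul (((T1.sub T0).div_const Ts).pow 2)
  have hs : ContDiffAt ℝ (⊤:ℕ∞)
      (fun z : Fin 5 → Fin 2 → ℝ =>
        (vthAux Ts (z 2) (z 3) (z 4) - 2*vthAux Ts (z 1) (z 2) (z 3)
          + vthAux Ts (z 0) (z 1) (z 2))/Ts^2) (fun _ => w) :=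
    ((T2.sub (contDiffAt_const.mul T1)).add T0).div_const _
  apply contDiffAt_pi.mpr
  intro i
  fin_cases i <;> simp only [vFu, Matrix.cons_val_zero, Matrix.cons_val_one, Matrix.head_cons,
    Matrix.cons_val_fin_one, Fin.isValue]
  · exact hq.add hr
  · exact hs

/-- VTOL aircraft example, Section 6.2 of the paper: for any sampling
time `T_s > 0` and parameter `ε`, the Euler-discretized VTOL aircraft system
`x¹⁺ = x¹ + T_s x³`, `x²⁺ = x² + T_s x⁴`, `x³⁺ = x³ + T_s sin(x⁵)(ε(x⁶)² − u¹)`,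
`x⁴⁺ = x⁴ + T_s cos(x⁵)(−ε(x⁶)² + u¹) − T_s`, `x⁵⁺ = x⁵ + T_s x⁶`, `x⁶⁺ = x⁶ + T_s u²`
is forward-flat around any equilibrium `x₀ = (x₀¹, x₀², 0, 0, 0, 0)`, `u₀ = (1, 0)`,
with flat output `y = (x¹, x²)`. -/
theorem vtol_example_forward_flat
    (Ts ε : ℝ) (hTs : 0 < Ts)
    (f : (Fin 6 → ℝ) → (Fin 2 → ℝ) → (Fin 6 → ℝ))
    (hf : f = fun x u =>
      ![x 0 + Ts * x 2,
        x 1 + Ts * x 3,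
        x 2 + Ts * Real.sin (x 4) * (ε * (x 5)^2 - u 0),
        x 3 + Ts * Real.cos (x 4) * (-(ε * (x 5)^2) + u 0) - Ts,
        x 4 + Ts * x 5,
        x 5 + Ts * u 1])
    (xa₀ xb₀ : ℝ)
    (x₀ : Fin 6 → ℝ) (hx₀ : x₀ = ![xa₀, xb₀, 0, 0, 0, 0])
    (u₀ : Fin 2 → ℝ) (hu₀ : u₀ = ![1, 0])
    (φ : (Fin 6 → ℝ) × (ℕ → Fin 2 → ℝ) → Fin 2 → ℝ)
    (hφ : φ = fun p => ![p.1 0, p.1 1]) :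
    -- `(x₀,u₀)` is an equilibrium
    f x₀ u₀ = x₀ ∧
    -- `y = (x¹, x²)` is a flat output, so the system is forward-flat
    IsFlatOutput f x₀ u₀ φ ∧ IsForwardFlat f x₀ u₀ := by
  subst hf hx₀ hu₀ hφ
  have hTs' : Ts ≠ 0 := hTs.ne'
  have hπ := Real.pi_pos
  have m4 : (![xa₀, xb₀, (0:ℝ), 0, 0, 0] : Fin 6 → ℝ) 4 = 0 := rfl
  have m5 : (![xa₀, xb₀, (0:ℝ), 0, 0, 0] : Fin 6 → ℝ) 5 = 0 := rfl
  have mu0 : (![(1:ℝ), 0] : Fin 2 → ℝ) 0 = 1 := rfl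
  have mu1 : (![(1:ℝ), 0] : Fin 2 → ℝ) 1 = 0 := rfl
  have key : ((fun x u =>
      ![x 0 + Ts * x 2,
        x 1 + Ts * x 3,
        x 2 + Ts * Real.sin (x 4) * (ε * (x 5)^2 - u 0),
        x 3 + Ts * Real.cos (x 4) * (-(ε * (x 5)^2) + u 0) - Ts,
        x 4 + Ts * x 5,
        x 5 + Ts * u 1]) ![xa₀, xb₀, 0, 0, 0, 0] ![1, 0] = ![xa₀, xb₀, 0, 0, 0, 0]) ∧
      IsFlatOutput (fun x u =>
      ![x 0 + Ts * x 2,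
        x 1 + Ts * x 3,
        x 2 + Ts * Real.sin (x 4) * (ε * (x 5)^2 - u 0),
        x 3 + Ts * Real.cos (x 4) * (-(ε * (x 5)^2) + u 0) - Ts,
        x 4 + Ts * x 5,
        x 5 + Ts * u 1]) ![xa₀, xb₀, 0, 0, 0, 0] ![1, 0]
        (fun p => ![p.1 0, p.1 1]) := by
    have heq : (fun x u =>
      ![x 0 + Ts * x 2,
        x 1 + Ts * x 3,
        x 2 + Ts * Real.sin (x 4) * (ε * (x 5)^2 - u 0),
        x 3 + Ts * Real.cos (x 4) * (-(ε * (x 5)^2) + u 0) - Ts,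
        x 4 + Ts * x 5,
        x 5 + Ts * u 1]) ![xa₀, xb₀, 0, 0, 0, 0] ![1, 0] = ![xa₀, xb₀, 0, 0, 0, 0] := by
      funext i; fin_cases i <;> norm_num [m4, m5, mu0, mu1,
        show (![xa₀, xb₀, (0:ℝ), 0, 0, 0] : Fin 6 → ℝ) 2 = 0 from rfl,
        show (![xa₀, xb₀, (0:ℝ), 0, 0, 0] : Fin 6 → ℝ) 3 = 0 from rfl]
    refine ⟨heq, ⟨0, fun q => ![q.1 0, q.1 1], ?_, fun p => rfl⟩, ?_⟩
    · apply contDiffAt_pi.mpr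
      intro i
      fin_cases i <;> simp <;>
        exact ((contDiff_apply ℝ ℝ _).comp contDiff_fst).contDiffAt
    · have hfix : sysShift (fun x u =>
      ![x 0 + Ts * x 2,
        x 1 + Ts * x 3,
        x 2 + Ts * Real.sin (x 4) * (ε * (x 5)^2 - u 0),
        x 3 + Ts * Real.cos (x 4) * (-(ε * (x 5)^2) + u 0) - Ts,
        x 4 + Ts * x 5,
        x 5 + Ts * u 1])
          ((![xa₀, xb₀, 0, 0, 0, 0], fun _ => ![1, 0]) :
            (Fin 6 → ℝ) × (ℕ → Fin 2 → ℝ)) = (![xa₀, xb₀, 0, 0, 0, 0], fun _ => ![1, 0]) := by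
        show ((fun x u =>
      ![x 0 + Ts * x 2,
        x 1 + Ts * x 3,
        x 2 + Ts * Real.sin (x 4) * (ε * (x 5)^2 - u 0),
        x 3 + Ts * Real.cos (x 4) * (-(ε * (x 5)^2) + u 0) - Ts,
        x 4 + Ts * x 5,
        x 5 + Ts * u 1]) ![xa₀, xb₀, 0, 0, 0, 0] ![1, 0],
          (fun _ => ![1, 0] : ℕ → Fin 2 → ℝ)) = _
        rw [heq]
      have hzpt : ∀ k : ℕ, shiftOut (fun x u =>
      ![x 0 + Ts * x 2,
        x 1 + Ts * x 3,
        x 2 + Ts * Real.sin (x 4) * (ε * (x 5)^2 - u 0),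
        x 3 + Ts * Real.cos (x 4) * (-(ε * (x 5)^2) + u 0) - Ts,
        x 4 + Ts * x 5,
        x 5 + Ts * u 1]) (fun p => ![p.1 0, p.1 1]) k
          ((![xa₀, xb₀, 0, 0, 0, 0], fun _ => ![1, 0]) :
            (Fin 6 → ℝ) × (ℕ → Fin 2 → ℝ)) = ![xa₀, xb₀] := by
        intro k
        rw [shiftOut_fixed _ _ _ hfix]
        rfl
      have hptx : (fun j : Fin 4 => shiftOut (fun x u =>
      ![x 0 + Ts * x 2,
        x 1 + Ts * x 3,
        x 2 + Ts * Real.sin (x 4) * (ε * (x 5)^2 - u 0),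
        x 3 + Ts * Real.cos (x 4) * (-(ε * (x 5)^2) + u 0) - Ts,
        x 4 + Ts * x 5,
        x 5 + Ts * u 1]) (fun p => ![p.1 0, p.1 1]) (j : ℕ)
          ((![xa₀, xb₀, 0, 0, 0, 0], fun _ => ![1, 0]) :
            (Fin 6 → ℝ) × (ℕ → Fin 2 → ℝ))) = fun _ => ![xa₀, xb₀] :=
        funext fun j => hzpt j
      have hptu : (fun j : Fin 5 => shiftOut (fun x u =>
      ![x 0 + Ts * x 2,
        x 1 + Ts * x 3,
        x 2 + Ts * Real.sin (x 4) * (ε * (x 5)^2 - u 0),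
        x 3 + Ts * Real.cos (x 4) * (-(ε * (x 5)^2) + u 0) - Ts,
        x 4 + Ts * x 5,
        x 5 + Ts * u 1]) (fun p => ![p.1 0, p.1 1]) (j : ℕ)
          ((![xa₀, xb₀, 0, 0, 0, 0], fun _ => ![1, 0]) :
            (Fin 6 → ℝ) × (ℕ → Fin 2 → ℝ))) = fun _ => ![xa₀, xb₀] :=
        funext fun j => hzpt j
      refine ⟨4, vFx Ts, vFu Ts ε, ?_, ?_, ?_⟩
      · rw [hptx]; exact vFx_contDiffAt Ts _
      · rw [hptu]; exact vFu_contDiffAt Ts ε _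
      · -- the eventually part
        have mem0 : (0:ℝ) ∈ Set.Ioo (-(Real.pi/2)) (Real.pi/2) :=
          ⟨by linarith, by linarith⟩
        have h40 : ∀ᶠ q : (Fin 6 → ℝ) × (ℕ → Fin 2 → ℝ) in
            nhds (![xa₀, xb₀, 0, 0, 0, 0], fun _ => ![1, 0]),
            q.1 4 ∈ Set.Ioo (-(Real.pi/2)) (Real.pi/2) := by
          have hc : ContinuousAt (fun q : (Fin 6 → ℝ) × (ℕ → Fin 2 → ℝ) => q.1 4)
              (![xa₀, xb₀, 0, 0, 0, 0], fun _ => ![1, 0]) := by fun_prop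
          exact hc (isOpen_Ioo.mem_nhds (by norm_num [m4, m5, mu0, mu1, mem0]))
        have h41 : ∀ᶠ q : (Fin 6 → ℝ) × (ℕ → Fin 2 → ℝ) in
            nhds (![xa₀, xb₀, 0, 0, 0, 0], fun _ => ![1, 0]),
            q.1 4 + Ts * q.1 5 ∈ Set.Ioo (-(Real.pi/2)) (Real.pi/2) := by
          have hc : ContinuousAt (fun q : (Fin 6 → ℝ) × (ℕ → Fin 2 → ℝ) =>
              q.1 4 + Ts * q.1 5) (![xa₀, xb₀, 0, 0, 0, 0], fun _ => ![1, 0]) := by fun_prop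
          exact hc (isOpen_Ioo.mem_nhds (by norm_num [m4, m5, mu0, mu1, mem0]))
        have h42 : ∀ᶠ q : (Fin 6 → ℝ) × (ℕ → Fin 2 → ℝ) in
            nhds (![xa₀, xb₀, 0, 0, 0, 0], fun _ => ![1, 0]),
            q.1 4 + Ts * q.1 5 + Ts * (q.1 5 + Ts * q.2 0 1) ∈
              Set.Ioo (-(Real.pi/2)) (Real.pi/2) := by
          have hc : ContinuousAt (fun q : (Fin 6 → ℝ) × (ℕ → Fin 2 → ℝ) =>
              q.1 4 + Ts * q.1 5 + Ts * (q.1 5 + Ts * q.2 0 1))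
              (![xa₀, xb₀, 0, 0, 0, 0], fun _ => ![1, 0]) := by fun_prop
          exact hc (isOpen_Ioo.mem_nhds (by norm_num [m4, m5, mu0, mu1, mem0]))
        have hv0 : ∀ᶠ q : (Fin 6 → ℝ) × (ℕ → Fin 2 → ℝ) in
            nhds (![xa₀, xb₀, 0, 0, 0, 0], fun _ => ![1, 0]),
            0 < q.2 0 0 - ε * q.1 5 ^ 2 := by
          have hc : ContinuousAt (fun q : (Fin 6 → ℝ) × (ℕ → Fin 2 → ℝ) =>
              q.2 0 0 - ε * q.1 5 ^ 2)
              (![xa₀, xb₀, 0, 0, 0, 0], fun _ => ![1, 0]) := by fun_prop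
          exact hc (isOpen_Ioi.mem_nhds (by norm_num [m4, m5, mu0, mu1]))
        have hv1 : ∀ᶠ q : (Fin 6 → ℝ) × (ℕ → Fin 2 → ℝ) in
            nhds (![xa₀, xb₀, 0, 0, 0, 0], fun _ => ![1, 0]),
            0 < q.2 1 0 - ε * (q.1 5 + Ts * q.2 0 1) ^ 2 := by
          have hc : ContinuousAt (fun q : (Fin 6 → ℝ) × (ℕ → Fin 2 → ℝ) =>
              q.2 1 0 - ε * (q.1 5 + Ts * q.2 0 1) ^ 2)
              (![xa₀, xb₀, 0, 0, 0, 0], fun _ => ![1, 0]) := by fun_prop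
          exact hc (isOpen_Ioi.mem_nhds (by norm_num [m4, m5, mu0, mu1]))
        have hv2 : ∀ᶠ q : (Fin 6 → ℝ) × (ℕ → Fin 2 → ℝ) in
            nhds (![xa₀, xb₀, 0, 0, 0, 0], fun _ => ![1, 0]),
            0 < q.2 2 0 - ε * (q.1 5 + Ts * q.2 0 1 + Ts * q.2 1 1) ^ 2 := by
          have hc : ContinuousAt (fun q : (Fin 6 → ℝ) × (ℕ → Fin 2 → ℝ) =>
              q.2 2 0 - ε * (q.1 5 + Ts * q.2 0 1 + Ts * q.2 1 1) ^ 2)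
              (![xa₀, xb₀, 0, 0, 0, 0], fun _ => ![1, 0]) := by fun_prop
          exact hc (isOpen_Ioi.mem_nhds (by norm_num [m4, m5, mu0, mu1]))
        filter_upwards [h40, h41, h42, hv0, hv1, hv2] with p c40 c41 c42 cv0 cv1 cv2
        let S : ℕ → Fin 6 → ℝ := fun k => ((sysShift (fun x u =>
      ![x 0 + Ts * x 2,
        x 1 + Ts * x 3,
        x 2 + Ts * Real.sin (x 4) * (ε * (x 5)^2 - u 0),
        x 3 + Ts * Real.cos (x 4) * (-(ε * (x 5)^2) + u 0) - Ts,
        x 4 + Ts * x 5,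
        x 5 + Ts * u 1]))^[k] p).1
        have hS : S = fun k => ((sysShift (fun x u =>
      ![x 0 + Ts * x 2,
        x 1 + Ts * x 3,
        x 2 + Ts * Real.sin (x 4) * (ε * (x 5)^2 - u 0),
        x 3 + Ts * Real.cos (x 4) * (-(ε * (x 5)^2) + u 0) - Ts,
        x 4 + Ts * x 5,
        x 5 + Ts * u 1]))^[k] p).1 := rfl
        have hS0 : S 0 = p.1 := rfl
        have e0 : ∀ k : ℕ, S (k+1) 0 = S k 0 + Ts * S k 2 := by
          intro k; simp only [hS, sysShift_fst_succ]; rfl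
        have e1 : ∀ k : ℕ, S (k+1) 1 = S k 1 + Ts * S k 3 := by
          intro k; simp only [hS, sysShift_fst_succ]; rfl
        have e2 : ∀ k : ℕ, S (k+1) 2 =
            S k 2 + Ts * Real.sin (S k 4) * (ε * (S k 5)^2 - p.2 k 0) := by
          intro k; simp only [hS, sysShift_fst_succ]; rfl
        have e3 : ∀ k : ℕ, S (k+1) 3 =
            S k 3 + Ts * Real.cos (S k 4) * (-(ε * (S k 5)^2) + p.2 k 0) - Ts := by
          intro k; simp only [hS, sysShift_fst_succ]; rfl
        have e4 : ∀ k : ℕ, S (k+1) 4 = S k 4 + Ts * S k 5 := by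
          intro k; simp only [hS, sysShift_fst_succ]; rfl
        have e5 : ∀ k : ℕ, S (k+1) 5 = S k 5 + Ts * p.2 k 1 := by
          intro k; simp only [hS, sysShift_fst_succ]; rfl
        have b01 : S 1 0 = S 0 0 + Ts * S 0 2 := e0 0
        have b02 : S 2 0 = S 1 0 + Ts * S 1 2 := e0 1
        have b03 : S 3 0 = S 2 0 + Ts * S 2 2 := e0 2
        have b04 : S 4 0 = S 3 0 + Ts * S 3 2 := e0 3
        have b11 : S 1 1 = S 0 1 + Ts * S 0 3 := e1 0
        have b12 : S 2 1 = S 1 1 + Ts * S 1 3 := e1 1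
        have b13 : S 3 1 = S 2 1 + Ts * S 2 3 := e1 2
        have b14 : S 4 1 = S 3 1 + Ts * S 3 3 := e1 3
        have b21 : S 1 2 = S 0 2 + Ts * Real.sin (S 0 4) * (ε * (S 0 5)^2 - p.2 0 0) := e2 0
        have b22 : S 2 2 = S 1 2 + Ts * Real.sin (S 1 4) * (ε * (S 1 5)^2 - p.2 1 0) := e2 1
        have b23 : S 3 2 = S 2 2 + Ts * Real.sin (S 2 4) * (ε * (S 2 5)^2 - p.2 2 0) := e2 2
        have b31 : S 1 3 = S 0 3 + Ts * Real.cos (S 0 4) * (-(ε * (S 0 5)^2) + p.2 0 0) - Ts := e3 0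
        have b32 : S 2 3 = S 1 3 + Ts * Real.cos (S 1 4) * (-(ε * (S 1 5)^2) + p.2 1 0) - Ts := e3 1
        have b33 : S 3 3 = S 2 3 + Ts * Real.cos (S 2 4) * (-(ε * (S 2 5)^2) + p.2 2 0) - Ts := e3 2
        have b41 : S 1 4 = S 0 4 + Ts * S 0 5 := e4 0
        have b42 : S 2 4 = S 1 4 + Ts * S 1 5 := e4 1
        have b51 : S 1 5 = S 0 5 + Ts * p.2 0 1 := e5 0
        have b52 : S 2 5 = S 1 5 + Ts * p.2 1 1 := e5 1
        have d00 : S 2 0 - 2*S 1 0 + S 0 0 =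
            Ts^2 * (-(Real.sin (S 0 4) * (p.2 0 0 - ε * (S 0 5)^2))) := by
          rw [b02, b01, b21]; ring
        have d01 : S 2 1 - 2*S 1 1 + S 0 1 =
            Ts^2 * (Real.cos (S 0 4) * (p.2 0 0 - ε * (S 0 5)^2) - 1) := by
          rw [b12, b11, b31]; ring
        have d10 : S 3 0 - 2*S 2 0 + S 1 0 =
            Ts^2 * (-(Real.sin (S 1 4) * (p.2 1 0 - ε * (S 1 5)^2))) := by
          rw [b03, b02, b22]; ring
        have d11 : S 3 1 - 2*S 2 1 + S 1 1 =
            Ts^2 * (Real.cos (S 1 4) * (p.2 1 0 - ε * (S 1 5)^2) - 1) := by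
          rw [b13, b12, b32]; ring
        have d20 : S 4 0 - 2*S 3 0 + S 2 0 =
            Ts^2 * (-(Real.sin (S 2 4) * (p.2 2 0 - ε * (S 2 5)^2))) := by
          rw [b04, b03, b23]; ring
        have d21 : S 4 1 - 2*S 3 1 + S 2 1 =
            Ts^2 * (Real.cos (S 2 4) * (p.2 2 0 - ε * (S 2 5)^2) - 1) := by
          rw [b14, b13, b33]; ring
        have c40' : S 0 4 ∈ Set.Ioo (-(Real.pi/2)) (Real.pi/2) := by rw [hS0]; exact c40
        have c41' : S 1 4 ∈ Set.Ioo (-(Real.pi/2)) (Real.pi/2) := by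
          rw [b41, hS0]; exact c41
        have c42' : S 2 4 ∈ Set.Ioo (-(Real.pi/2)) (Real.pi/2) := by
          rw [b42, b41, b51, hS0]; exact c42
        have cv0' : 0 < p.2 0 0 - ε * (S 0 5)^2 := by rw [hS0]; exact cv0
        have cv1' : 0 < p.2 1 0 - ε * (S 1 5)^2 := by rw [b51, hS0]; exact cv1
        have cv2' : 0 < p.2 2 0 - ε * (S 2 5)^2 := by rw [b52, b51, hS0]; exact cv2
        have hθ0 : vthAux Ts ![S 0 0, S 0 1] ![S 1 0, S 1 1] ![S 2 0, S 2 1] = S 0 4 :=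
          vthAux_eq Ts hTs' (S 0 4) (p.2 0 0 - ε * (S 0 5)^2)
            c40'.1 c40'.2 cv0' _ _ _ d00 d01
        have hθ1 : vthAux Ts ![S 1 0, S 1 1] ![S 2 0, S 2 1] ![S 3 0, S 3 1] = S 1 4 :=
          vthAux_eq Ts hTs' (S 1 4) (p.2 1 0 - ε * (S 1 5)^2)
            c41'.1 c41'.2 cv1' _ _ _ d10 d11
        have hθ2 : vthAux Ts ![S 2 0, S 2 1] ![S 3 0, S 3 1] ![S 4 0, S 4 1] = S 2 4 :=
          vthAux_eq Ts hTs' (S 2 4) (p.2 2 0 - ε * (S 2 5)^2)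
            c42'.1 c42'.2 cv2' _ _ _ d20 d21
        have hcos0 : Real.cos (S 0 4) ≠ 0 := (Real.cos_pos_of_mem_Ioo c40').ne'
        have g2 : S 0 2 = (S 1 0 - S 0 0)/Ts := by rw [b01]; field_simp; ring
        have g3 : S 0 3 = (S 1 1 - S 0 1)/Ts := by rw [b11]; field_simp; ring
        have g5 : S 0 5 = (vthAux Ts ![S 1 0, S 1 1] ![S 2 0, S 2 1] ![S 3 0, S 3 1] -
            vthAux Ts ![S 0 0, S 0 1] ![S 1 0, S 1 1] ![S 2 0, S 2 1])/Ts := by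
          rw [hθ1, hθ0, b41]; field_simp; ring
        have gu0 : p.2 0 0 = ((S 2 1 - 2*S 1 1 + S 0 1)/Ts^2 + 1) /
            Real.cos (vthAux Ts ![S 0 0, S 0 1] ![S 1 0, S 1 1] ![S 2 0, S 2 1]) +
            ε * ((vthAux Ts ![S 1 0, S 1 1] ![S 2 0, S 2 1] ![S 3 0, S 3 1] -
              vthAux Ts ![S 0 0, S 0 1] ![S 1 0, S 1 1] ![S 2 0, S 2 1])/Ts)^2 := by
          rw [hθ0, hθ1, d01, b41]
          field_simp
          ring
        have gu1 : p.2 0 1 = (vthAux Ts ![S 2 0, S 2 1] ![S 3 0, S 3 1] ![S 4 0, S 4 1] -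
            2*vthAux Ts ![S 1 0, S 1 1] ![S 2 0, S 2 1] ![S 3 0, S 3 1] +
            vthAux Ts ![S 0 0, S 0 1] ![S 1 0, S 1 1] ![S 2 0, S 2 1])/Ts^2 := by
          rw [hθ2, hθ1, hθ0, b42, b41, b51]
          field_simp
          ring
        constructor
        · funext i
          fin_cases i
          · exact rfl
          · exact rfl
          · exact g2
          · exact g3
          · exact hθ0.symm
          · exact g5
        · funext i
          fin_cases i
          · exact gu0
          · exact gu1
  exact ⟨key.1, key.2, _, key.2⟩
end
end
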